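/- Let J ∈ 𝒥_{k,N} with N = kn − ℓ, 0 ≤ ℓ < k, with orthonormal eigenpairs J v̂_j = λ_j v̂_j and v_j = E_1^* v̂_j ∈ ℂ^k. For d ≥ 0 let 𝒩_d be the ℂ-subspace of ℂ^k-valued polynomials p of degree at most d satisfying Σ_{j=1}^N |v_j^* p(λ_j)|^2 = 0. Then dim 𝒩_d = 0 for every d < n − 1, and dim 𝒩_{n−1} = ℓ. -/

import Mathlib

open Matrix Polynomial

noncomputable section

/-- `Esel k N b` is the block selection matrix `E_{b+1} ∈ ℂ^{N×k}` whose rows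
`b*k, …, b*k + (k-1)` form the identity `I_k` (zero-based indexing). -/
def Esel (k N : ℕ) (b : ℕ) : Matrix (Fin N) (Fin k) ℂ :=
  Matrix.of fun i a => if (i : ℕ) = b * k + (a : ℕ) then 1 else 0

/-- The last (possibly smaller) block selection matrix `E_n ∈ ℂ^{N×(k-ℓ)}`. -/
def EselLast (k n ℓ : ℕ) : Matrix (Fin (n * k - ℓ)) (Fin (k - ℓ)) ℂ :=
  Matrix.of fun i a => if (i : ℕ) = (n - 1) * k + (a : ℕ) then 1 else 0

/-- A square matrix is upper triangular with (real) positive diagonal entries. -/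
def UpperTriPosDiag {k : ℕ} (M : Matrix (Fin k) (Fin k) ℂ) : Prop :=
  ∀ r c : Fin k, ((c : ℕ) < (r : ℕ) → M r c = 0) ∧ (r = c → 0 < (M r c).re ∧ (M r c).im = 0)

/-- A (rectangular) matrix is in row echelon form with positive pivots. -/
def RowEchelonPosPivots {r m : ℕ} (R : Matrix (Fin r) (Fin m) ℂ) : Prop :=
  ∃ p : Fin r → Fin m, StrictMono p ∧
    ∀ i : Fin r, (0 < (R i (p i)).re ∧ (R i (p i)).im = 0) ∧
      ∀ j : Fin m, (j : ℕ) < (p i : ℕ) → R i j = 0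

/-- The class `𝒥_{k,N}` (`N = n*k - ℓ`): Hermitian block tridiagonal matrices with
`k×k` blocks (the last diagonal block of size `(k-ℓ)×(k-ℓ)`), subdiagonal blocks
`B_0,…,B_{n-3}` upper triangular with positive diagonal and `B_{n-2}` in row echelon
form with positive pivots. -/
def IsJkN (k n ℓ : ℕ) (J : Matrix (Fin (n * k - ℓ)) (Fin (n * k - ℓ)) ℂ) : Prop :=
  J.IsHermitian ∧
  (∀ i j : Fin (n * k - ℓ),
      ((i : ℕ) / k + 2 ≤ (j : ℕ) / k ∨ (j : ℕ) / k + 2 ≤ (i : ℕ) / k) → J i j = 0) ∧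
  (∀ b : ℕ, b + 3 ≤ n →
      UpperTriPosDiag ((Esel k (n * k - ℓ) (b + 1))ᴴ * J * Esel k (n * k - ℓ) b)) ∧
  RowEchelonPosPivots ((EselLast k n ℓ)ᴴ * J * Esel k (n * k - ℓ) (n - 2))


/-- The set `𝒩_d` of `ℂ^k`-valued polynomials `p` of degree at most `d` with
`Σ_j |v_j^* p(λ_j)|² = 0`. -/
def NcalSet (k N : ℕ) (d : ℕ) (lam : Fin N → ℝ) (v : Fin N → Fin k → ℂ) :
    Set (Fin k → Polynomial ℂ) :=
  {p | (∀ a, (p a).degree ≤ (d : ℕ)) ∧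
      ∑ j, Complex.normSq (∑ a, star (v j a) * (p a).eval ((lam j : ℂ))) = 0}

namespace NullSpaceDim

lemma strictMono_fin_ge {a b : ℕ} {f : Fin a → Fin b} (hf : StrictMono f) :
    ∀ i : Fin a, (i : ℕ) ≤ (f i : ℕ) := by
  have : ∀ t : ℕ, ∀ i : Fin a, (i : ℕ) = t → (i : ℕ) ≤ (f i : ℕ) := by
    intro t
    induction t using Nat.strong_induction_on with
    | _ t ih =>
      intro i hi
      rcases Nat.eq_zero_or_pos t with h0 | h0
      · omega
      · have hjlt : t - 1 < a := by omega
        have hj : (⟨t - 1, hjlt⟩ : Fin a) < i := by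
          rw [Fin.lt_def]; simp; omega
        have h1 := ih (t - 1) (by omega) ⟨t - 1, hjlt⟩ rfl
        have h2 := hf hj
        rw [Fin.lt_def] at h2
        simp at h1
        omega
  exact fun i => this (i : ℕ) i rfl

lemma strictMono_fin_id {m : ℕ} {f : Fin m → Fin m} (hf : StrictMono f) : ∀ i, f i = i := by
  have h1 := strictMono_fin_ge hf
  have hg : StrictMono (fun i : Fin m => (f i.rev).rev) := by
    intro a b hab
    exact Fin.rev_lt_rev.mpr (hf (Fin.rev_lt_rev.mpr hab))
  have h2 := strictMono_fin_ge hg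
  intro i
  have h3 := h2 i.rev
  simp only [Fin.rev_rev] at h3
  have h4 : (f i : ℕ) ≤ (i : ℕ) := by
    have hr : ∀ j : Fin m, (j.rev : ℕ) = m - 1 - (j : ℕ) := by
      intro j; rw [Fin.val_rev]; omega
    rw [hr, hr] at h3
    have := (f i).isLt; have := i.isLt
    omega
  exact Fin.le_antisymm (Fin.le_def.mpr h4) (Fin.le_def.mpr (h1 i))

lemma pivot_ne_zero {z : ℂ} (h : 0 < z.re) : z ≠ 0 := by
  intro hz; rw [hz] at h; simp at h

lemma echelon_mul {r k : ℕ} {R : Matrix (Fin r) (Fin k) ℂ} {U : Matrix (Fin k) (Fin k) ℂ}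
    (hR : RowEchelonPosPivots R) (hU : RowEchelonPosPivots U) :
    RowEchelonPosPivots (R * U) := by
  obtain ⟨p, hp, hRp⟩ := hR
  obtain ⟨q, hq, hUq⟩ := hU
  have hqid : ∀ s, q s = s := strictMono_fin_id hq
  have hUtri : ∀ s j : Fin k, (j : ℕ) < (s : ℕ) → U s j = 0 := by
    intro s j hj
    have := (hUq s).2 j
    rw [hqid s] at this
    exact this hj
  refine ⟨p, hp, fun i => ⟨?_, ?_⟩⟩
  · have : (R * U) i (p i) = R i (p i) * U (p i) (p i) := by
      rw [Matrix.mul_apply]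
      rw [Finset.sum_eq_single (p i)]
      · intro s _ hs
        rcases lt_or_gt_of_ne (Fin.val_ne_of_ne hs) with h | h
        · rw [(hRp i).2 s h, zero_mul]
        · rw [hUtri s (p i) h, mul_zero]
      · intro h; exact absurd (Finset.mem_univ _) h
    rw [this]
    have h1 := (hRp i).1
    have h2 := (hUq (p i)).1
    rw [hqid (p i)] at h2
    constructor
    · rw [Complex.mul_re, h1.2, h2.2]
      simpa using mul_pos h1.1 h2.1
    · rw [Complex.mul_im, h1.2, h2.2]; ring
  · intro j hj
    rw [Matrix.mul_apply]
    apply Finset.sum_eq_zero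
    intro s _
    rcases lt_or_ge (s : ℕ) (p i : ℕ) with h | h
    · rw [(hRp i).2 s h, zero_mul]
    · rw [hUtri s j (lt_of_lt_of_le hj h), mul_zero]

lemma echelon_vecMul_eq_zero {r m : ℕ} {R : Matrix (Fin r) (Fin m) ℂ}
    (hR : RowEchelonPosPivots R) {u : Fin r → ℂ} (hu : u ᵥ* R = 0) : u = 0 := by
  obtain ⟨p, hp, hRp⟩ := hR
  have key : ∀ t : ℕ, ∀ i : Fin r, (i : ℕ) = t → u i = 0 := by
    intro t
    induction t using Nat.strong_induction_on with
    | _ t ih =>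
      intro i hi
      have h0 := congrFun hu (p i)
      rw [Matrix.vecMul, dotProduct] at h0
      have hsum : ∑ i', u i' * R i' (p i) = u i * R i (p i) := by
        apply Finset.sum_eq_single_of_mem i (Finset.mem_univ i)
        intro s _ hs
        rcases lt_or_gt_of_ne (Fin.val_ne_of_ne hs) with h | h
        · rw [ih (s : ℕ) (by omega) s rfl, zero_mul]
        · rw [(hRp s).2 (p i) (by
            have := hp (show i < s from Fin.lt_def.mpr h)
            exact Fin.lt_def.mp this), mul_zero]
      rw [hsum] at h0
      rcases mul_eq_zero.mp h0 with h | h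
      · exact h
      · exact absurd h (pivot_ne_zero (hRp i).1.1)
  funext i
  exact key (i : ℕ) i rfl

lemma echelon_square_isUnit {k : ℕ} {U : Matrix (Fin k) (Fin k) ℂ}
    (hU : RowEchelonPosPivots U) : IsUnit U := by
  rw [← Matrix.vecMul_injective_iff_isUnit]
  intro u v huv
  have huv' : u ᵥ* U = v ᵥ* U := huv
  have : (u - v) ᵥ* U = 0 := by
    rw [Matrix.sub_vecMul, huv', sub_self]
  have := echelon_vecMul_eq_zero ⟨_, hU.choose_spec.1, hU.choose_spec.2⟩ this
  · exact sub_eq_zero.mp this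



/- ### arithmetic helpers -/

lemma kle {k n ℓ : ℕ} (hn : 2 ≤ n) (hℓ : ℓ < k) : k ≤ n * k - ℓ := by
  have h2 : 2 * k ≤ n * k := Nat.mul_le_mul_right k hn
  omega

lemma blockend_le {k n ℓ m : ℕ} (hℓ : ℓ < k) (hm : m + 2 ≤ n) : m * k + k ≤ n * k - ℓ := by
  have h1 : m * k + k ≤ (n - 1) * k := by
    rw [← Nat.succ_mul]
    exact Nat.mul_le_mul_right k (by omega)
  have h2 : (n - 1) * k = n * k - k := by rw [Nat.sub_mul, one_mul]
  have h3 : k ≤ n * k := Nat.le_mul_of_pos_left k (by omega)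
  omega

lemma idx_lt {k n ℓ m r : ℕ} (hℓ : ℓ < k) (hm : m + 2 ≤ n) (hr : r < k) :
    m * k + r < n * k - ℓ := by
  have h1 : m * k + k ≤ (n - 1) * k := by
    have := Nat.mul_le_mul_right k (show m + 1 ≤ n - 1 by omega)
    rwa [Nat.succ_mul] at this
  have h2 : (n - 1) * k = n * k - k := by rw [Nat.sub_mul, one_mul]
  have h3 : k ≤ n * k := Nat.le_mul_of_pos_left k (by omega)
  omega

lemma lastidx_lt {k n ℓ r : ℕ} (hn : 2 ≤ n) (hℓ : ℓ < k) (hr : r < k - ℓ) :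
    (n - 1) * k + r < n * k - ℓ := by
  have h2 : (n - 1) * k = n * k - k := by rw [Nat.sub_mul, one_mul]
  have h3 : k ≤ n * k := Nat.le_mul_of_pos_left k (by omega)
  omega

lemma div_helper {k m r : ℕ} (hr : r < k) : (m * k + r) / k = m := by
  rw [mul_comm, Nat.mul_add_div (by omega)]
  simp [Nat.div_eq_of_lt hr]

lemma div_le_block {k n ℓ : ℕ} (hn : 2 ≤ n) (hℓ : ℓ < k) (j : Fin (n * k - ℓ)) :
    (j : ℕ) / k ≤ n - 1 := by
  have h1 : (j : ℕ) < n * k := lt_of_lt_of_le j.isLt (Nat.sub_le _ _)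
  have h2 : (j : ℕ) / k < n := (Nat.div_lt_iff_lt_mul (show 0 < k by omega)).mpr h1
  omega

/- ### sum helpers -/

lemma star_if {P : Prop} [Decidable P] : star (if P then (1 : ℂ) else 0) = if P then 1 else 0 := by
  split <;> simp

lemma sum_if_eq {N c : ℕ} (hc : c < N) (f : Fin N → ℂ) :
    ∑ j : Fin N, (if (j : ℕ) = c then 1 else 0) * f j = f ⟨c, hc⟩ := by
  rw [Finset.sum_eq_single_of_mem (⟨c, hc⟩ : Fin N) (Finset.mem_univ _)]
  · simp
  · intro s _ hs
    rw [if_neg (by simpa [Fin.ext_iff] using hs), zero_mul]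

lemma sum_if_eq' {N c : ℕ} (hc : c < N) (f : Fin N → ℂ) :
    ∑ j : Fin N, f j * (if (j : ℕ) = c then 1 else 0) = f ⟨c, hc⟩ := by
  rw [Finset.sum_eq_single_of_mem (⟨c, hc⟩ : Fin N) (Finset.mem_univ _)]
  · simp
  · intro s _ hs
    rw [if_neg (by simpa [Fin.ext_iff] using hs), mul_zero]

lemma sum_block {N k b sz : ℕ} (hk : 0 < k) (f : Fin N → ℂ)
    (hsz : ∀ s, s < sz → b * k + s < N)
    (hsz2 : ∀ i : Fin N, (i : ℕ) / k = b → (i : ℕ) - b * k < sz)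
    (hf : ∀ i : Fin N, (i : ℕ) / k ≠ b → f i = 0) :
    ∑ i, f i = ∑ s : Fin sz, f ⟨b * k + s, hsz s s.isLt⟩ := by
  classical
  set e : Fin sz → Fin N := fun s => ⟨b * k + s, hsz s s.isLt⟩ with he
  have hinj : Function.Injective e := by
    intro s t hst
    have : b * k + (s : ℕ) = b * k + (t : ℕ) := congrArg Fin.val hst
    exact Fin.ext (by omega)
  calc ∑ i, f i = ∑ i ∈ Finset.univ.image e, f i := by
        symm
        apply Finset.sum_subset (Finset.subset_univ _)
        intro i _ hi
        apply hf
        intro hib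
        apply hi
        rw [Finset.mem_image]
        have hge : b * k ≤ (i : ℕ) := by
          have := Nat.div_mul_le_self (i : ℕ) k
          rw [hib] at this
          calc b * k = (i : ℕ) / k * k := by rw [hib]
          _ ≤ (i : ℕ) := Nat.div_mul_le_self _ _
        refine ⟨⟨(i : ℕ) - b * k, hsz2 i hib⟩, Finset.mem_univ _, ?_⟩
        exact Fin.ext (by simp [he]; omega)
    _ = ∑ s, f (e s) := Finset.sum_image (fun x _ y _ h => hinj h)

/- ### Esel product entries -/

lemma conjT_Esel_mul {k N b : ℕ} (h : b * k + k ≤ N) (M : Matrix (Fin N) (Fin N) ℂ)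
    (r : Fin k) (j : Fin N) :
    ((Esel k N b)ᴴ * M) r j = M ⟨b * k + (r : ℕ), by omega⟩ j := by
  rw [Matrix.mul_apply]
  simp only [Matrix.conjTranspose_apply, Esel, Matrix.of_apply, star_if]
  exact sum_if_eq (c := b * k + (r : ℕ)) (by have := r.isLt; omega) (fun i => M i j)

lemma mul_Esel {k N b : ℕ} {rr : ℕ} (h : b * k + k ≤ N) (M : Matrix (Fin rr) (Fin N) ℂ)
    (i : Fin rr) (s : Fin k) :
    (M * Esel k N b) i s = M i ⟨b * k + (s : ℕ), by omega⟩ := by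
  rw [Matrix.mul_apply]
  simp only [Esel, Matrix.of_apply]
  exact sum_if_eq' (c := b * k + (s : ℕ)) (by have := s.isLt; omega) (fun j => M i j)

lemma conjT_EselLast_mul {k n ℓ : ℕ} (hn : 2 ≤ n) (hℓ : ℓ < k)
    (M : Matrix (Fin (n * k - ℓ)) (Fin (n * k - ℓ)) ℂ) (r : Fin (k - ℓ)) (j : Fin (n * k - ℓ)) :
    ((EselLast k n ℓ)ᴴ * M) r j = M ⟨(n - 1) * k + (r : ℕ), lastidx_lt hn hℓ r.isLt⟩ j := by
  rw [Matrix.mul_apply]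
  simp only [Matrix.conjTranspose_apply, EselLast, Matrix.of_apply, star_if]
  exact sum_if_eq (c := (n - 1) * k + (r : ℕ)) (lastidx_lt hn hℓ r.isLt) (fun i => M i j)

/- ### structural lemmas about powers of J -/

section Struct

variable {k n ℓ : ℕ} {J : Matrix (Fin (n * k - ℓ)) (Fin (n * k - ℓ)) ℂ}
variable (hn : 2 ≤ n) (hℓ : ℓ < k)
variable (hband : ∀ i j : Fin (n * k - ℓ),
      ((i : ℕ) / k + 2 ≤ (j : ℕ) / k ∨ (j : ℕ) / k + 2 ≤ (i : ℕ) / k) → J i j = 0)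

include hn hℓ hband in
/-- block `b` of `J^m E₁` vanishes for `b > m`. -/
lemma pow_block_zero : ∀ (m : ℕ) (j : Fin (n * k - ℓ)) (a : Fin k),
    m < (j : ℕ) / k → (J ^ m) j (Fin.castLE (kle hn hℓ) a) = 0 := by
  intro m
  induction m with
  | zero =>
    intro j a hj
    rw [pow_zero]
    apply Matrix.one_apply_ne
    intro hja
    rw [hja] at hj
    simp only [Fin.coe_castLE] at hj
    rw [Nat.div_eq_of_lt a.isLt] at hj
    omega
  | succ m ih =>
    intro j a hj
    rw [pow_succ', Matrix.mul_apply]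
    apply Finset.sum_eq_zero
    intro i _
    rcases lt_or_ge m ((i : ℕ) / k) with h | h
    · rw [ih i a h, mul_zero]
    · rw [hband j i (Or.inr (by omega)), zero_mul]

/-- the diagonal Krylov block `T_m = E_{m+1}^* J^m E_1`. -/
def Tmat (hℓ : ℓ < k) (J : Matrix (Fin (n * k - ℓ)) (Fin (n * k - ℓ)) ℂ) (hn : 2 ≤ n)
    (m : ℕ) (hm : m + 2 ≤ n) : Matrix (Fin k) (Fin k) ℂ :=
  Matrix.of fun r a =>
    (J ^ m) ⟨m * k + (r : ℕ), idx_lt hℓ hm r.isLt⟩ (Fin.castLE (kle hn hℓ) a)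

/-- the last Krylov block `T = E_n^* J^{n-1} E_1`. -/
def Tlast (hℓ : ℓ < k) (J : Matrix (Fin (n * k - ℓ)) (Fin (n * k - ℓ)) ℂ) (hn : 2 ≤ n) :
    Matrix (Fin (k - ℓ)) (Fin k) ℂ :=
  Matrix.of fun r a =>
    (J ^ (n - 1)) ⟨(n - 1) * k + (r : ℕ), lastidx_lt hn hℓ r.isLt⟩ (Fin.castLE (kle hn hℓ) a)

lemma Tmat_zero_echelon (h0 : 0 + 2 ≤ n) : RowEchelonPosPivots (Tmat hℓ J hn 0 h0) := by
  have hent : ∀ r a : Fin k, Tmat hℓ J hn 0 h0 r a = if (r : ℕ) = (a : ℕ) then 1 else 0 := by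
    intro r a
    simp only [Tmat, Matrix.of_apply, pow_zero, Matrix.one_apply]
    by_cases h : (r : ℕ) = (a : ℕ)
    · rw [if_pos (Fin.ext (by simp [h])), if_pos h]
    · rw [if_neg (fun hc => h (by simpa using congrArg Fin.val hc)), if_neg h]
  refine ⟨id, strictMono_id, fun i => ⟨?_, ?_⟩⟩
  · rw [show id i = i from rfl, hent i i, if_pos rfl]
    norm_num
  · intro j hj
    simp only [id_eq] at hj
    rw [hent i j, if_neg (by omega)]

include hband in
lemma Tmat_succ (m : ℕ) (hm : m + 3 ≤ n) :
    Tmat hℓ J hn (m + 1) (by omega) =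
      (Matrix.of fun r s : Fin k =>
        J ⟨(m + 1) * k + (r : ℕ), idx_lt hℓ (by omega) r.isLt⟩
          ⟨m * k + (s : ℕ), idx_lt hℓ (by omega) s.isLt⟩) * Tmat hℓ J hn m (by omega) := by
  ext r a
  rw [Matrix.mul_apply]
  simp only [Tmat, Matrix.of_apply]
  rw [pow_succ', Matrix.mul_apply]
  have hdiv : (((m + 1) * k + (r : ℕ)) / k) = m + 1 := div_helper r.isLt
  rw [sum_block (show 0 < k by omega)
      (f := fun j => J ⟨(m + 1) * k + (r : ℕ), idx_lt hℓ (by omega) r.isLt⟩ j *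
        (J ^ m) j (Fin.castLE (kle hn hℓ) a))
      (b := m) (sz := k)
      (fun s hs => idx_lt hℓ (by omega) hs)
      (fun i hib => by
        have h1 : (i : ℕ) = k * ((i : ℕ) / k) + (i : ℕ) % k := (Nat.div_add_mod _ _).symm
        have h2 : (i : ℕ) % k < k := Nat.mod_lt _ (by omega)
        rw [hib] at h1
        have h3 : k * m = m * k := Nat.mul_comm _ _
        omega)
      (fun i hib => by
        rcases lt_or_gt_of_ne hib with h | h
        · rw [hband ⟨(m + 1) * k + (r : ℕ), idx_lt hℓ (by omega) r.isLt⟩ i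
            (Or.inr (by show (i : ℕ) / k + 2 ≤ ((m + 1) * k + (r : ℕ)) / k; rw [hdiv]; omega)),
            zero_mul]
        · rw [pow_block_zero hn hℓ hband m i a h, mul_zero])]

include hband in
lemma Tlast_rec :
    Tlast hℓ J hn =
      (Matrix.of fun (r : Fin (k - ℓ)) (s : Fin k) =>
        J ⟨(n - 1) * k + (r : ℕ), lastidx_lt hn hℓ r.isLt⟩
          ⟨(n - 2) * k + (s : ℕ), idx_lt hℓ (by omega) s.isLt⟩) *
        Tmat hℓ J hn (n - 2) (by omega) := by
  ext r a
  rw [Matrix.mul_apply]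
  simp only [Tlast, Tmat, Matrix.of_apply]
  have hrk : (r : ℕ) < k := by have := r.isLt; omega
  have hn1 : n - 1 = (n - 2) + 1 := by omega
  have hdiv : ((n - 1) * k + (r : ℕ)) / k = n - 1 := div_helper hrk
  have hpow : J ^ (n - 1) = J * J ^ (n - 2) := by rw [hn1, pow_succ']
  rw [hpow, Matrix.mul_apply]
  rw [sum_block (show 0 < k by omega)
      (f := fun j => J ⟨(n - 1) * k + (r : ℕ), lastidx_lt hn hℓ r.isLt⟩ j *
        (J ^ (n - 2)) j (Fin.castLE (kle hn hℓ) a))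
      (b := n - 2) (sz := k)
      (fun s hs => idx_lt hℓ (by omega) hs)
      (fun i hib => by
        have h1 : (i : ℕ) = k * ((i : ℕ) / k) + (i : ℕ) % k := (Nat.div_add_mod _ _).symm
        have h2 : (i : ℕ) % k < k := Nat.mod_lt _ (by omega)
        rw [hib] at h1
        have h3 : k * (n - 2) = (n - 2) * k := Nat.mul_comm _ _
        omega)
      (fun i hib => by
        rcases lt_or_gt_of_ne hib with h | h
        · rw [hband ⟨(n - 1) * k + (r : ℕ), lastidx_lt hn hℓ r.isLt⟩ i
            (Or.inr (by
              show (i : ℕ) / k + 2 ≤ ((n - 1) * k + (r : ℕ)) / k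
              rw [hdiv]; omega)), zero_mul]
        · rw [pow_block_zero hn hℓ hband (n - 2) i a h, mul_zero])]

lemma upperTri_echelon {M : Matrix (Fin k) (Fin k) ℂ} (h : UpperTriPosDiag M) :
    RowEchelonPosPivots M :=
  ⟨id, strictMono_id, fun i => ⟨(h i i).2 rfl, fun j hj => (h i j).1 hj⟩⟩

variable (hSub : ∀ b : ℕ, b + 3 ≤ n →
      UpperTriPosDiag ((Esel k (n * k - ℓ) (b + 1))ᴴ * J * Esel k (n * k - ℓ) b))

lemma Bmat_eq (m : ℕ) (hm : m + 3 ≤ n) :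
    (Matrix.of fun r s : Fin k =>
        J ⟨(m + 1) * k + (r : ℕ), idx_lt hℓ (by omega) r.isLt⟩
          ⟨m * k + (s : ℕ), idx_lt hℓ (by omega) s.isLt⟩) =
      (Esel k (n * k - ℓ) (m + 1))ᴴ * J * Esel k (n * k - ℓ) m := by
  ext r s
  rw [mul_Esel (blockend_le hℓ (by omega)) _ r s,
    conjT_Esel_mul (blockend_le hℓ (by omega)) J r _]
  rfl

include hband hSub in
lemma Tmat_echelon : ∀ (m : ℕ) (hm : m + 2 ≤ n), RowEchelonPosPivots (Tmat hℓ J hn m hm) := by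
  intro m
  induction m with
  | zero => intro hm; exact Tmat_zero_echelon hn hℓ hm
  | succ m ih =>
    intro hm
    have heq := Tmat_succ hn hℓ hband m (by omega)
    have hB : RowEchelonPosPivots
        (Matrix.of fun r s : Fin k =>
          J ⟨(m + 1) * k + (r : ℕ), idx_lt hℓ (by omega) r.isLt⟩
            ⟨m * k + (s : ℕ), idx_lt hℓ (by omega) s.isLt⟩) := by
      rw [Bmat_eq hℓ m (by omega)]
      exact upperTri_echelon (hSub m (by omega))
    have := echelon_mul hB (ih (by omega))
    rw [← heq] at this
    exact this

variable (hLast : RowEchelonPosPivots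
    ((EselLast k n ℓ)ᴴ * J * Esel k (n * k - ℓ) (n - 2)))

include hband hSub hLast in
lemma Tlast_echelon : RowEchelonPosPivots (Tlast hℓ J hn) := by
  have heq := Tlast_rec hn hℓ hband
  have hB : RowEchelonPosPivots
      (Matrix.of fun (r : Fin (k - ℓ)) (s : Fin k) =>
        J ⟨(n - 1) * k + (r : ℕ), lastidx_lt hn hℓ r.isLt⟩
          ⟨(n - 2) * k + (s : ℕ), idx_lt hℓ (by omega) s.isLt⟩) := by
    have heq2 : (Matrix.of fun (r : Fin (k - ℓ)) (s : Fin k) =>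
        J ⟨(n - 1) * k + (r : ℕ), lastidx_lt hn hℓ r.isLt⟩
          ⟨(n - 2) * k + (s : ℕ), idx_lt hℓ (by omega) s.isLt⟩) =
        (EselLast k n ℓ)ᴴ * J * Esel k (n * k - ℓ) (n - 2) := by
      ext r s
      rw [mul_Esel (blockend_le hℓ (by omega)) _ r s, conjT_EselLast_mul hn hℓ J r _]
      rfl
    rw [heq2]
    exact hLast
  have := echelon_mul hB (Tmat_echelon hn hℓ hband hSub (n - 2) (by omega))
  rw [← heq] at this
  exact this

include hband hSub in
lemma kry_inj (c : Fin n → Fin k → ℂ)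
    (hc0 : ∀ j : Fin (n * k - ℓ),
      ∑ m : Fin n, ∑ a : Fin k, c m a * (J ^ (m : ℕ)) j (Fin.castLE (kle hn hℓ) a) = 0)
    (htop : c ⟨n - 1, by omega⟩ = 0) : c = 0 := by
  by_contra hc
  have hex : ∃ m : Fin n, c m ≠ 0 := by
    by_contra h
    push_neg at h
    exact hc (funext h)
  classical
  set s : Finset (Fin n) := Finset.univ.filter (fun m => c m ≠ 0) with hs_def
  have hs : s.Nonempty := ⟨hex.choose, by simp [hs_def, hex.choose_spec]⟩
  set M := s.max' hs with hM_def
  have hMmem : M ∈ s := s.max'_mem hs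
  have hMne : c M ≠ 0 := by simpa [hs_def] using hMmem
  have hMub : ∀ m : Fin n, M < m → c m = 0 := by
    intro m hm
    by_contra h
    exact absurd (s.le_max' m (by simp [hs_def, h])) (not_le.mpr hm)
  have hMval : (M : ℕ) + 2 ≤ n := by
    have hne : (M : ℕ) ≠ n - 1 := by
      intro h
      exact hMne (by rwa [show M = (⟨n - 1, by omega⟩ : Fin n) from Fin.ext h])
    have := M.isLt
    omega
  have hblock : (Tmat hℓ J hn (M : ℕ) hMval).mulVec (c M) = 0 := by
    funext r
    have h0 := hc0 ⟨(M : ℕ) * k + (r : ℕ), idx_lt hℓ hMval r.isLt⟩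
    have hdiv : ((M : ℕ) * k + (r : ℕ)) / k = (M : ℕ) := div_helper r.isLt
    rw [Finset.sum_eq_single_of_mem M (Finset.mem_univ _)] at h0
    · rw [Pi.zero_apply, Matrix.mulVec, dotProduct]
      rw [← h0]
      apply Finset.sum_congr rfl
      intro a _
      rw [mul_comm]
      rfl
    · intro m _ hm
      rcases lt_or_gt_of_ne (Fin.val_ne_of_ne hm) with h | h
      · apply Finset.sum_eq_zero
        intro a _
        rw [pow_block_zero hn hℓ hband (m : ℕ) _ a (by rw [hdiv]; exact h), mul_zero]
      · apply Finset.sum_eq_zero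
        intro a _
        rw [hMub m (Fin.lt_def.mpr h), Pi.zero_apply, zero_mul]
  have hU := echelon_square_isUnit (Tmat_echelon hn hℓ hband hSub (M : ℕ) hMval)
  have hinj := Matrix.mulVec_injective_iff_isUnit.mpr hU
  exact hMne (hinj (by rw [hblock, Matrix.mulVec_zero]))

include hband hSub hLast in
lemma kry_surj_dual (w : Fin (n * k - ℓ) → ℂ)
    (hw : ∀ (m : Fin n) (a : Fin k),
      ∑ j, w j * (J ^ (m : ℕ)) j (Fin.castLE (kle hn hℓ) a) = 0) :
    w = 0 := by
  have key : ∀ t : ℕ, ∀ j : Fin (n * k - ℓ), (j : ℕ) = t → w j = 0 := by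
    intro t
    induction t using Nat.strong_induction_on with
    | _ t ih =>
      intro j hjt
      have hble : (j : ℕ) / k ≤ n - 1 := div_le_block hn hℓ j
      have hvanish : ∀ (m : ℕ) (hm : m < n) (i : Fin (n * k - ℓ)), (i : ℕ) / k ≠ m →
          (i : ℕ) / k = (j : ℕ) / k → False ∨ True := fun _ _ _ _ _ => Or.inr trivial
      rcases le_or_gt ((j : ℕ) / k + 2) n with hcase | hcase
      · -- interior block
        set b := (j : ℕ) / k with hb
        have hbn : b < n := by omega
        have hzero : ∀ a : Fin k,
            ∑ s : Fin k, w ⟨b * k + (s : ℕ), idx_lt hℓ hcase s.isLt⟩ *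
              Tmat hℓ J hn b hcase s a = 0 := by
          intro a
          have h0 := hw ⟨b, hbn⟩ a
          rw [sum_block (show 0 < k by omega)
              (f := fun i => w i * (J ^ b) i (Fin.castLE (kle hn hℓ) a))
              (b := b) (sz := k)
              (fun s hs => idx_lt hℓ hcase hs)
              (fun i hib => by
                have h1 : (i : ℕ) = k * ((i : ℕ) / k) + (i : ℕ) % k := (Nat.div_add_mod _ _).symm
                have h2 : (i : ℕ) % k < k := Nat.mod_lt _ (by omega)
                rw [hib] at h1
                have h3 : k * b = b * k := Nat.mul_comm _ _
                omega)
              (fun i hib => by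
                rcases lt_or_gt_of_ne hib with h | h
                · have hilt : (i : ℕ) < t := by
                    have hik : (i : ℕ) < ((i : ℕ) / k + 1) * k := by
                      have h1 : (i : ℕ) = k * ((i : ℕ) / k) + (i : ℕ) % k :=
                        (Nat.div_add_mod _ _).symm
                      have h2 : (i : ℕ) % k < k := Nat.mod_lt _ (by omega)
                      have h3 : k * ((i : ℕ) / k) = ((i : ℕ) / k) * k := Nat.mul_comm _ _
                      rw [Nat.succ_mul]
                      omega
                    have hbk : ((i : ℕ) / k + 1) * k ≤ b * k := Nat.mul_le_mul_right k (by omega)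
                    have hjb : b * k ≤ (j : ℕ) := by
                      rw [hb]
                      exact Nat.div_mul_le_self _ _
                    omega
                  rw [ih (i : ℕ) (by omega) i rfl, zero_mul]
                · rw [pow_block_zero hn hℓ hband b i a h, mul_zero])] at h0
          exact h0
        have hvm : (fun s : Fin k => w ⟨b * k + (s : ℕ), idx_lt hℓ hcase s.isLt⟩) ᵥ*
            Tmat hℓ J hn b hcase = 0 := by
          funext a
          exact hzero a
        have := echelon_vecMul_eq_zero (Tmat_echelon hn hℓ hband hSub b hcase) hvm
        have hjk : (j : ℕ) - b * k < k := by
          have h1 : (j : ℕ) = k * ((j : ℕ) / k) + (j : ℕ) % k := (Nat.div_add_mod _ _).symm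
          have h2 : (j : ℕ) % k < k := Nat.mod_lt _ (by omega)
          have h3 : k * b = b * k := Nat.mul_comm _ _
          rw [← hb] at h1
          omega
        have hj : j = ⟨b * k + ((j : ℕ) - b * k), idx_lt hℓ hcase hjk⟩ := by
          apply Fin.ext
          simp only []
          have hjb : b * k ≤ (j : ℕ) := by rw [hb]; exact Nat.div_mul_le_self _ _
          omega
        rw [hj]
        exact congrFun this ⟨(j : ℕ) - b * k, hjk⟩
      · -- last block
        have hlast : (j : ℕ) / k = n - 1 := by omega
        have hjin : (j : ℕ) - (n - 1) * k < k - ℓ := by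
          have h1 : (n - 1) * k = n * k - k := by rw [Nat.sub_mul, one_mul]
          have h3 : k ≤ n * k := Nat.le_mul_of_pos_left k (by omega)
          have := j.isLt
          omega
        have hzero : ∀ a : Fin k,
            ∑ s : Fin (k - ℓ), w ⟨(n - 1) * k + (s : ℕ), lastidx_lt hn hℓ s.isLt⟩ *
              Tlast hℓ J hn s a = 0 := by
          intro a
          have h0 := hw ⟨n - 1, by omega⟩ a
          rw [sum_block (show 0 < k by omega)
              (f := fun i => w i * (J ^ (n - 1)) i (Fin.castLE (kle hn hℓ) a))
              (b := n - 1) (sz := k - ℓ)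
              (fun s hs => lastidx_lt hn hℓ hs)
              (fun i hib => by
                have h1 : (n - 1) * k = n * k - k := by rw [Nat.sub_mul, one_mul]
                have h3 : k ≤ n * k := Nat.le_mul_of_pos_left k (by omega)
                have := i.isLt
                omega)
              (fun i hib => by
                rcases lt_or_gt_of_ne hib with h | h
                · have hilt : (i : ℕ) < t := by
                    have hik : (i : ℕ) < ((i : ℕ) / k + 1) * k := by
                      have h1 : (i : ℕ) = k * ((i : ℕ) / k) + (i : ℕ) % k :=
                        (Nat.div_add_mod _ _).symm
                      have h2 : (i : ℕ) % k < k := Nat.mod_lt _ (by omega)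
                      have h3 : k * ((i : ℕ) / k) = ((i : ℕ) / k) * k := Nat.mul_comm _ _
                      rw [Nat.succ_mul]
                      omega
                    have hbk : ((i : ℕ) / k + 1) * k ≤ (n - 1) * k :=
                      Nat.mul_le_mul_right k (by omega)
                    have hjb : (n - 1) * k ≤ (j : ℕ) := by
                      have := Nat.div_mul_le_self (j : ℕ) k
                      rw [hlast] at this
                      calc (n - 1) * k = (j : ℕ) / k * k := by rw [hlast]
                      _ ≤ (j : ℕ) := Nat.div_mul_le_self _ _
                    omega
                  rw [ih (i : ℕ) (by omega) i rfl, zero_mul]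
                · rw [pow_block_zero hn hℓ hband (n - 1) i a h, mul_zero])] at h0
          exact h0
        have hvm : (fun s : Fin (k - ℓ) => w ⟨(n - 1) * k + (s : ℕ), lastidx_lt hn hℓ s.isLt⟩) ᵥ*
            Tlast hℓ J hn = 0 := by
          funext a
          exact hzero a
        have := echelon_vecMul_eq_zero (Tlast_echelon hn hℓ hband hSub hLast) hvm
        have hj : j = ⟨(n - 1) * k + ((j : ℕ) - (n - 1) * k), lastidx_lt hn hℓ hjin⟩ := by
          apply Fin.ext
          simp only []
          have hjb : (n - 1) * k ≤ (j : ℕ) := by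
            calc (n - 1) * k = (j : ℕ) / k * k := by rw [hlast]
            _ ≤ (j : ℕ) := Nat.div_mul_le_self _ _
          omega
        rw [hj]
        exact congrFun this ⟨(j : ℕ) - (n - 1) * k, hjin⟩
  funext j
  exact key (j : ℕ) j rfl

end Struct

end NullSpaceDim

/-- For `J ∈ 𝒥_{k,N}` with `N = kn - ℓ`, the null space `𝒩_d` of the
quasi-inner product induced by the spectral measure is trivial for `d < n-1` and has
dimension `ℓ` for `d = n-1`. -/
theorem null_space_dimension
    (k n ℓ : ℕ) (hk : 1 ≤ k) (hn : 2 ≤ n) (hℓ : ℓ < k)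
    (J : Matrix (Fin (n * k - ℓ)) (Fin (n * k - ℓ)) ℂ) (hJ : IsJkN k n ℓ J)
    (lam : Fin (n * k - ℓ) → ℝ) (vhat : Fin (n * k - ℓ) → (Fin (n * k - ℓ) → ℂ))
    (heig : ∀ j, J.mulVec (vhat j) = (lam j : ℂ) • vhat j)
    (horth : ∀ i j, ∑ a, star (vhat i a) * vhat j a = if i = j then 1 else 0) :
    (∀ d : ℕ, d + 1 < n →
        NcalSet k (n * k - ℓ) d lam
          (fun j => (Esel k (n * k - ℓ) 0)ᴴ.mulVec (vhat j)) = {0}) ∧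
    (∃ S : Submodule ℂ (Fin k → Polynomial ℂ),
        (S : Set (Fin k → Polynomial ℂ)) =
            NcalSet k (n * k - ℓ) (n - 1) lam
              (fun j => (Esel k (n * k - ℓ) 0)ᴴ.mulVec (vhat j)) ∧
        Module.finrank ℂ S = ℓ) := by
  classical
  obtain ⟨hHerm, hband, hSub, hLast⟩ := hJ
  have hkle : k ≤ n * k - ℓ := NullSpaceDim.kle hn hℓ
  set v : Fin (n * k - ℓ) → Fin k → ℂ :=
    fun j => (Esel k (n * k - ℓ) 0)ᴴ.mulVec (vhat j) with hv_def
  have hv : ∀ (j : Fin (n * k - ℓ)) (a : Fin k),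
      v j a = vhat j (Fin.castLE hkle a) := by
    intro j a
    show ∑ i, (Esel k (n * k - ℓ) 0)ᴴ a i * vhat j i = _
    simp only [Matrix.conjTranspose_apply, Esel, Matrix.of_apply, NullSpaceDim.star_if]
    rw [NullSpaceDim.sum_if_eq (c := 0 * k + (a : ℕ)) (by have := a.isLt; omega) (vhat j)]
    congr 1
    exact Fin.ext (by simp)
  have hleft : ∀ (m : ℕ) (j t : Fin (n * k - ℓ)),
      ∑ i, (starRingEnd ℂ) (vhat j i) * (J ^ m) i t =
        ((lam j : ℂ)) ^ m * (starRingEnd ℂ) (vhat j t) := by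
    intro m
    induction m with
    | zero =>
      intro j t
      simp only [pow_zero, one_mul]
      rw [Finset.sum_eq_single_of_mem t (Finset.mem_univ _)]
      · rw [Matrix.one_apply_eq, mul_one]
      · intro i _ hi
        rw [Matrix.one_apply_ne hi, mul_zero]
    | succ m ih =>
      intro j t
      rw [pow_succ]
      have hswap : ∑ i, (starRingEnd ℂ) (vhat j i) * (J ^ m * J) i t
          = ∑ s, (∑ i, (starRingEnd ℂ) (vhat j i) * (J ^ m) i s) * J s t := by
        simp only [Matrix.mul_apply, Finset.mul_sum]
        rw [Finset.sum_comm]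
        apply Finset.sum_congr rfl
        intro s _
        rw [Finset.sum_mul]
        apply Finset.sum_congr rfl
        intro i _
        ring
      rw [hswap]
      have hjt : ∑ s, (starRingEnd ℂ) (vhat j s) * J s t
          = (lam j : ℂ) * (starRingEnd ℂ) (vhat j t) := by
        have h1 : ∀ s, (starRingEnd ℂ) (vhat j s) * J s t
            = (starRingEnd ℂ) (vhat j s * (starRingEnd ℂ) (J s t)) := by
          intro s
          rw [_root_.map_mul, Complex.conj_conj]
        have h2 : ∀ s, (starRingEnd ℂ) (J s t) = J t s := by
          intro s
          exact hHerm.apply t s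
        calc ∑ s, (starRingEnd ℂ) (vhat j s) * J s t
            = (starRingEnd ℂ) (∑ s, J t s * vhat j s) := by
              rw [map_sum]
              apply Finset.sum_congr rfl
              intro s _
              rw [h1 s, h2 s, mul_comm]
          _ = (starRingEnd ℂ) ((J.mulVec (vhat j)) t) := rfl
          _ = (starRingEnd ℂ) ((lam j : ℂ) * vhat j t) := by rw [heig j]; rfl
          _ = (lam j : ℂ) * (starRingEnd ℂ) (vhat j t) := by
              rw [_root_.map_mul, Complex.conj_ofReal]
      calc ∑ s, (∑ i, (starRingEnd ℂ) (vhat j i) * (J ^ m) i s) * J s t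
          = ∑ s, ((lam j : ℂ)) ^ m * ((starRingEnd ℂ) (vhat j s) * J s t) := by
            apply Finset.sum_congr rfl
            intro s _
            rw [ih j s]
            ring
        _ = ((lam j : ℂ)) ^ m * ∑ s, (starRingEnd ℂ) (vhat j s) * J s t := by
            rw [Finset.mul_sum]
        _ = ((lam j : ℂ)) ^ (m + 1) * (starRingEnd ℂ) (vhat j t) := by
            rw [hjt, pow_succ]
            ring
  have hbridge : ∀ p : Fin k → Polynomial ℂ, (∀ a, (p a).natDegree < n) →
      ∀ j, ∑ a, star (v j a) * (p a).eval ((lam j : ℂ)) =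
        ∑ i, (starRingEnd ℂ) (vhat j i) *
          (∑ m : Fin n, ∑ a, (p a).coeff m * (J ^ (m : ℕ)) i (Fin.castLE hkle a)) := by
    intro p hdeg j
    have lhs : ∑ a, star (v j a) * (p a).eval ((lam j : ℂ))
        = ∑ m : Fin n, ∑ a, (p a).coeff m *
            (((lam j : ℂ)) ^ (m : ℕ) * (starRingEnd ℂ) (vhat j (Fin.castLE hkle a))) := by
      rw [Finset.sum_comm]
      apply Finset.sum_congr rfl
      intro a _
      rw [hv j a, Polynomial.eval_eq_sum_range' (hdeg a), Finset.mul_sum,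
        ← Fin.sum_univ_eq_sum_range (fun i => star (vhat j (Fin.castLE hkle a)) *
          ((p a).coeff i * (lam j : ℂ) ^ i)) n]
      apply Finset.sum_congr rfl
      intro m _
      rw [starRingEnd_apply]
      ring
    have rhs : ∑ i, (starRingEnd ℂ) (vhat j i) *
          (∑ m : Fin n, ∑ a, (p a).coeff m * (J ^ (m : ℕ)) i (Fin.castLE hkle a))
        = ∑ m : Fin n, ∑ a, (p a).coeff m *
            (((lam j : ℂ)) ^ (m : ℕ) * (starRingEnd ℂ) (vhat j (Fin.castLE hkle a))) := by
      simp only [Finset.mul_sum]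
      rw [Finset.sum_comm]
      apply Finset.sum_congr rfl
      intro m _
      rw [Finset.sum_comm]
      apply Finset.sum_congr rfl
      intro a _
      rw [← hleft (m : ℕ) j (Fin.castLE hkle a), Finset.mul_sum]
      apply Finset.sum_congr rfl
      intro i _
      ring
    rw [lhs, rhs]
  have hperp : ∀ y : Fin (n * k - ℓ) → ℂ,
      (∀ j, ∑ i, (starRingEnd ℂ) (vhat j i) * y i = 0) → y = 0 := by
    intro y hy
    set Mv : Matrix (Fin (n * k - ℓ)) (Fin (n * k - ℓ)) ℂ :=
      Matrix.of fun j i => (starRingEnd ℂ) (vhat j i) with hMv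
    have hMM : Mv * Mvᴴ = 1 := by
      ext j j'
      rw [Matrix.mul_apply, Matrix.one_apply]
      have := horth j j'
      rw [← this]
      apply Finset.sum_congr rfl
      intro i _
      simp only [hMv, Matrix.conjTranspose_apply, Matrix.of_apply, starRingEnd_apply, star_star]
    have hUnit : IsUnit Mv := (Matrix.isUnit_iff_isUnit_det Mv).mpr (Matrix.isUnit_det_of_right_inverse hMM)
    have hinj := Matrix.mulVec_injective_iff_isUnit.mpr hUnit
    apply hinj
    rw [Matrix.mulVec_zero]
    funext j
    exact hy j
  have hchar : ∀ (d : ℕ), d ≤ n - 1 → ∀ p : Fin k → Polynomial ℂ,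
      p ∈ NcalSet k (n * k - ℓ) d lam v ↔
        ((∀ a, (p a).degree ≤ (d : ℕ)) ∧
          ∀ i : Fin (n * k - ℓ), ∑ m : Fin n, ∑ a : Fin k,
            (p a).coeff m * (J ^ (m : ℕ)) i (Fin.castLE hkle a) = 0) := by
    intro d hd p
    have hnat : (∀ a, (p a).degree ≤ (d : ℕ)) → ∀ a, (p a).natDegree < n := by
      intro hdeg a
      have h2 : (p a).natDegree ≤ d := Polynomial.natDegree_le_iff_degree_le.mpr (hdeg a)
      omega
    constructor
    · rintro ⟨hdeg, hsum⟩
      refine ⟨hdeg, ?_⟩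
      have hz : ∀ j, ∑ a, star (v j a) * (p a).eval ((lam j : ℂ)) = 0 := by
        intro j
        rw [Finset.sum_eq_zero_iff_of_nonneg
          (fun j _ => Complex.normSq_nonneg _)] at hsum
        exact Complex.normSq_eq_zero.mp (hsum j (Finset.mem_univ j))
      have := hperp (fun i => ∑ m : Fin n, ∑ a : Fin k,
          (p a).coeff m * (J ^ (m : ℕ)) i (Fin.castLE hkle a))
        (fun j => by rw [← hbridge p (hnat hdeg) j]; exact hz j)
      exact fun i => congrFun this i
    · rintro ⟨hdeg, hK⟩
      refine ⟨hdeg, ?_⟩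
      apply Finset.sum_eq_zero
      intro j _
      have h0 : (∑ a, star (v j a) * (p a).eval ((lam j : ℂ))) = 0 := by
        rw [hbridge p (hnat hdeg) j]
        apply Finset.sum_eq_zero
        intro i _
        rw [hK i, mul_zero]
      rw [h0]
      exact map_zero Complex.normSq
  constructor
  · intro d hd
    ext p
    simp only [Set.mem_singleton_iff]
    constructor
    · intro hp
      obtain ⟨hdeg, hK⟩ := (hchar d (by omega) p).mp hp
      have hc := NullSpaceDim.kry_inj hn hℓ hband hSub (fun m a => (p a).coeff (m : ℕ))
        (fun j => hK j)
        (by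
          funext a
          show (p a).coeff (n - 1) = 0
          exact Polynomial.coeff_eq_zero_of_degree_lt (lt_of_le_of_lt (hdeg a)
            (by exact_mod_cast (by omega : d < n - 1))))
      funext a
      show p a = 0
      apply Polynomial.ext
      intro m
      rw [Polynomial.coeff_zero]
      rcases lt_or_ge m n with hm | hm
      · simpa using congrFun (congrFun hc ⟨m, hm⟩) a
      · exact Polynomial.coeff_eq_zero_of_degree_lt (lt_of_le_of_lt (hdeg a)
          (by exact_mod_cast (by omega : d < m)))
    · rintro rfl
      refine ⟨fun a => by simp, by simp⟩
  · set Φ : (Fin k → Polynomial ℂ) →ₗ[ℂ] (Fin (n * k - ℓ) → ℂ) := {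
      toFun := fun p i => ∑ m : Fin n, ∑ a : Fin k,
        (p a).coeff m * (J ^ (m : ℕ)) i (Fin.castLE hkle a)
      map_add' := by
        intro p q
        funext i
        simp only [Pi.add_apply, Polynomial.coeff_add, add_mul, Finset.sum_add_distrib]
      map_smul' := by
        intro c p
        funext i
        simp only [Pi.smul_apply, Polynomial.coeff_smul, smul_eq_mul, RingHom.id_apply,
          Pi.smul_apply, Finset.mul_sum, mul_assoc] } with hPhi
    refine ⟨(Submodule.pi Set.univ
        (fun _ : Fin k => Polynomial.degreeLE ℂ ((n - 1 : ℕ) : WithBot ℕ))) ⊓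
        LinearMap.ker Φ, ?_, ?_⟩
    · ext p
      rw [SetLike.mem_coe, Submodule.mem_inf, Submodule.mem_pi, LinearMap.mem_ker]
      rw [hchar (n - 1) le_rfl p]
      constructor
      · rintro ⟨h1, h2⟩
        exact ⟨fun a => Polynomial.mem_degreeLE.mp (h1 a (Set.mem_univ a)),
          fun i => congrFun h2 i⟩
      · rintro ⟨h1, h2⟩
        exact ⟨fun a _ => Polynomial.mem_degreeLE.mpr (h1 a), funext fun i => h2 i⟩
    · -- finrank computation
      set Km : Matrix (Fin (n * k - ℓ)) (Fin n × Fin k) ℂ :=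
        Matrix.of fun i ma => (J ^ (ma.1 : ℕ)) i (Fin.castLE hkle ma.2) with hKm
      set Cmap : (Fin k → Polynomial ℂ) →ₗ[ℂ] (Fin n × Fin k → ℂ) := {
        toFun := fun p ma => (p ma.2).coeff ma.1
        map_add' := by intro p q; funext ma; simp
        map_smul' := by intro c p; funext ma; simp } with hCmap
      have hPhiK : ∀ p, Φ p = Km.mulVec (Cmap p) := by
        intro p
        funext i
        show (∑ m : Fin n, ∑ a : Fin k, _) = ∑ ma : Fin n × Fin k, Km i ma * Cmap p ma
        rw [Fintype.sum_prod_type]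
        apply Finset.sum_congr rfl
        intro m _
        apply Finset.sum_congr rfl
        intro a _
        rw [mul_comm]
        rfl
      have hinjT : Function.Injective (Kmᵀ.mulVecLin) := by
        intro x y hxy
        have hxy' : Kmᵀ.mulVec x = Kmᵀ.mulVec y := hxy
        have h0 : (x - y) ᵥ* Km = 0 := by
          rw [Matrix.mulVec_transpose, Matrix.mulVec_transpose] at hxy'
          rw [Matrix.sub_vecMul, hxy', sub_self]
        have hz := NullSpaceDim.kry_surj_dual hn hℓ hband hSub hLast (x - y)
          (fun m a => by
            have h1 := congrFun h0 (m, a)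
            exact h1)
        exact sub_eq_zero.mp hz
      have hrankT : Kmᵀ.rank = n * k - ℓ := by
        rw [Matrix.rank, LinearMap.finrank_range_of_inj hinjT]
        simp [Module.finrank_pi]
      have hrank : Km.rank = n * k - ℓ := by rw [← Matrix.rank_transpose, hrankT]
      have hrange : LinearMap.range Km.mulVecLin = ⊤ := by
        apply Submodule.eq_top_of_finrank_eq
        rw [← Matrix.rank, hrank]
        simp [Module.finrank_pi]
      have hrn := LinearMap.finrank_range_add_finrank_ker (Km.mulVecLin)
      rw [hrange, finrank_top] at hrn
      have hdom1 : Module.finrank ℂ (Fin n × Fin k → ℂ) = n * k := by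
        simp [Module.finrank_pi]
      have hdom2 : Module.finrank ℂ (Fin (n * k - ℓ) → ℂ) = n * k - ℓ := by
        simp [Module.finrank_pi]
      rw [hdom1, hdom2] at hrn
      -- the equivalence between S and ker
      have hmemF : ∀ ps : ↥((Submodule.pi Set.univ
          (fun _ : Fin k => Polynomial.degreeLE ℂ ((n - 1 : ℕ) : WithBot ℕ))) ⊓
          LinearMap.ker Φ), (Cmap.comp (Submodule.subtype _)) ps ∈
            LinearMap.ker Km.mulVecLin := by
        intro ps
        rw [LinearMap.mem_ker]
        have h2 : Φ ps.1 = 0 := (Submodule.mem_inf.mp ps.2).2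
        show Km.mulVec (Cmap ps.1) = 0
        rw [← hPhiK ps.1]
        exact h2
      set F : ↥((Submodule.pi Set.univ
          (fun _ : Fin k => Polynomial.degreeLE ℂ ((n - 1 : ℕ) : WithBot ℕ))) ⊓
          LinearMap.ker Φ) →ₗ[ℂ] ↥(LinearMap.ker Km.mulVecLin) :=
        LinearMap.codRestrict _ (Cmap.comp (Submodule.subtype _)) hmemF with hF
      have hFinj : Function.Injective F := by
        intro x y hxy
        have hco : Cmap x.1 = Cmap y.1 := by
          have := congrArg Subtype.val hxy
          exact this
        apply Subtype.ext
        funext a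
        apply Polynomial.ext
        intro m
        have hdx : (x.1 a).degree ≤ ((n - 1 : ℕ) : WithBot ℕ) :=
          Polynomial.mem_degreeLE.mp ((Submodule.mem_inf.mp x.2).1 a (Set.mem_univ a))
        have hdy : (y.1 a).degree ≤ ((n - 1 : ℕ) : WithBot ℕ) :=
          Polynomial.mem_degreeLE.mp ((Submodule.mem_inf.mp y.2).1 a (Set.mem_univ a))
        rcases lt_or_ge m n with hm | hm
        · exact congrFun hco (⟨m, hm⟩, a)
        · rw [Polynomial.coeff_eq_zero_of_degree_lt (lt_of_le_of_lt hdx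
            (by exact_mod_cast (by omega : n - 1 < m))),
            Polynomial.coeff_eq_zero_of_degree_lt (lt_of_le_of_lt hdy
            (by exact_mod_cast (by omega : n - 1 < m)))]
      have hFsurj : Function.Surjective F := by
        rintro ⟨c, hc⟩
        set p : Fin k → Polynomial ℂ :=
          fun a => ∑ m : Fin n, Polynomial.monomial (m : ℕ) (c (m, a)) with hp
        have hcp : Cmap p = c := by
          funext ma
          obtain ⟨m, a⟩ := ma
          show (p a).coeff (m : ℕ) = c (m, a)
          rw [hp]
          rw [Polynomial.finset_sum_coeff]
          rw [Finset.sum_eq_single_of_mem m (Finset.mem_univ _)]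
          · rw [Polynomial.coeff_monomial, if_pos rfl]
          · intro m' _ hm'
            rw [Polynomial.coeff_monomial, if_neg (fun h => hm' (Fin.ext h))]
        have hdegp : ∀ a, (p a).degree ≤ ((n - 1 : ℕ) : WithBot ℕ) := by
          intro a
          rw [hp]
          refine le_trans (Polynomial.degree_sum_le _ _) (Finset.sup_le fun m _ => ?_)
          refine le_trans (Polynomial.degree_monomial_le _ _) ?_
          exact_mod_cast (by have := m.isLt; omega : (m : ℕ) ≤ n - 1)
        have hpm : p ∈ (Submodule.pi Set.univ
            (fun _ : Fin k => Polynomial.degreeLE ℂ ((n - 1 : ℕ) : WithBot ℕ))) ⊓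
            LinearMap.ker Φ := by
          rw [Submodule.mem_inf]
          constructor
          · intro a _
            exact Polynomial.mem_degreeLE.mpr (hdegp a)
          · rw [LinearMap.mem_ker, hPhiK, hcp]
            exact hc
        refine ⟨⟨p, hpm⟩, ?_⟩
        apply Subtype.ext
        exact hcp
      have hEq := LinearEquiv.finrank_eq (LinearEquiv.ofBijective F ⟨hFinj, hFsurj⟩)
      rw [hEq]
      have h2k : 2 * k ≤ n * k := Nat.mul_le_mul_right k hn
      omega
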